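/- Every skew-merged involution corresponds under the Robinson–Schensted correspondence to a hook-shaped standard Young tableau. Equivalently, for every skew-merged involution σ of length n, the lengths of the longest increasing subsequence and the longest decreasing subsequence of σ sum to n + 1. -/

import Mathlib

/-- The length of the longest increasing subsequence of a permutation:
the largest size of a set of positions on which the permutation is
strictly increasing. -/
def lisLen {n : ℕ} (σ : Equiv.Perm (Fin n)) : ℕ :=
  (Finset.univ.filter (fun s : Finset (Fin n) =>
    ∀ i ∈ s, ∀ j ∈ s, i < j → σ i < σ j)).sup Finset.card


/-- The length of the longest decreasing subsequence of a permutation. -/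
def ldsLen {n : ℕ} (σ : Equiv.Perm (Fin n)) : ℕ :=
  (Finset.univ.filter (fun s : Finset (Fin n) =>
    ∀ i ∈ s, ∀ j ∈ s, i < j → σ j < σ i)).sup Finset.card


/-- σ contains the pattern 2143. -/
def Contains2143 {n : ℕ} (σ : Equiv.Perm (Fin n)) : Prop :=
  ∃ i1 i2 i3 i4 : Fin n, i1 < i2 ∧ i2 < i3 ∧ i3 < i4 ∧
    σ i2 < σ i1 ∧ σ i1 < σ i4 ∧ σ i4 < σ i3

/-- σ contains the pattern 3412. -/
def Contains3412 {n : ℕ} (σ : Equiv.Perm (Fin n)) : Prop :=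
  ∃ i1 i2 i3 i4 : Fin n, i1 < i2 ∧ i2 < i3 ∧ i3 < i4 ∧
    σ i3 < σ i4 ∧ σ i4 < σ i1 ∧ σ i1 < σ i2

/-- A permutation is skew-merged iff it avoids 2143 and 3412. -/
def SkewMerged {n : ℕ} (σ : Equiv.Perm (Fin n)) : Prop :=
  ¬ Contains2143 σ ∧ ¬ Contains3412 σ

/-- Key induction lemma: if a skew-merged involution maps the interval of
positions `[a, b]` into itself, then there is an increasing set `S` and a
decreasing set `T` inside `[a, b]` with `|S| + |T| = (b - a) + 2`.
The proof peels the interval from the ends: either `a` is fixed, or `b` is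
fixed, or `σ` swaps `a` and `b`; any other behaviour of the endpoints
produces a `2143` or a `3412` pattern. -/
lemma key_lemma {n : ℕ} (σ : Equiv.Perm (Fin n))
    (h2143 : ¬ Contains2143 σ) (h3412 : ¬ Contains3412 σ)
    (hinv : ∀ i, σ (σ i) = i) :
    ∀ k a b : ℕ, b < n → a ≤ b → b - a = k →
    (∀ i : Fin n, a ≤ i.val → i.val ≤ b → a ≤ (σ i).val ∧ (σ i).val ≤ b) →
    ∃ S T : Finset (Fin n),
      (∀ i ∈ S, a ≤ i.val ∧ i.val ≤ b) ∧ (∀ i ∈ T, a ≤ i.val ∧ i.val ≤ b) ∧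
      (∀ i ∈ S, ∀ j ∈ S, i < j → σ i < σ j) ∧
      (∀ i ∈ T, ∀ j ∈ T, i < j → σ j < σ i) ∧
      S.card + T.card = (b - a) + 2 := by
  intro k
  induction k using Nat.strong_induction_on with
  | _ k IH =>
    intro a b hbn hab hk hinvr
    obtain ⟨aF, haFv⟩ : ∃ x : Fin n, x.val = a := ⟨⟨a, by omega⟩, rfl⟩
    obtain ⟨bF, hbFv⟩ : ∃ x : Fin n, x.val = b := ⟨⟨b, hbn⟩, rfl⟩
    rcases eq_or_lt_of_le hab with heq | hlt
    · -- a = b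
      refine ⟨{aF}, {aF}, ?_, ?_, ?_, ?_, ?_⟩
      · intro i hi; rw [Finset.mem_singleton] at hi; subst hi; omega
      · intro i hi; rw [Finset.mem_singleton] at hi; subst hi; omega
      · intro i hi j hj hij
        rw [Finset.mem_singleton] at hi hj; subst hi; subst hj; exact absurd hij (lt_irrefl _)
      · intro i hi j hj hij
        rw [Finset.mem_singleton] at hi hj; subst hi; subst hj; exact absurd hij (lt_irrefl _)
      · simp; omega
    · -- a < b
      by_cases h1 : σ aF = aF
      · -- fixed left endpoint
        have hinner : ∀ i : Fin n, a + 1 ≤ i.val → i.val ≤ b →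
            a + 1 ≤ (σ i).val ∧ (σ i).val ≤ b := by
          intro i hi1 hi2
          have hb := hinvr i (by omega) hi2
          have hne : (σ i).val ≠ a := by
            intro hval
            have h' : σ i = aF := Fin.ext (by omega)
            have h'' : σ (σ i) = σ aF := congrArg σ h'
            rw [hinv, h1] at h''
            have := congrArg Fin.val h''
            omega
          exact ⟨by omega, hb.2⟩
        obtain ⟨S, T, hSb, hTb, hSi, hTd, hcard⟩ :=
          IH (k - 1) (by omega) (a + 1) b hbn (by omega) (by omega) hinner
        have haS : aF ∉ S := by
          intro h
          have := (hSb aF h).1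
          omega
        refine ⟨insert aF S, T, ?_, fun i hi => by have := hTb i hi; omega, ?_, hTd, ?_⟩
        · intro i hi
          rcases Finset.mem_insert.mp hi with h | h
          · subst h; omega
          · have := hSb i h; omega
        · intro i hi j hj hij
          rcases Finset.mem_insert.mp hi with h | h <;>
            rcases Finset.mem_insert.mp hj with h' | h'
          · subst h; subst h'; exact absurd hij (lt_irrefl _)
          · subst h
            have hjb := hSb j h'
            have := hinner j hjb.1 hjb.2
            rw [h1]
            exact Fin.lt_def.mpr (by omega)
          · subst h'
            have hib := hSb i h
            exact absurd (Fin.lt_def.mp hij) (by omega)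
          · exact hSi i h j h' hij
        · rw [Finset.card_insert_of_notMem haS]; omega
      · by_cases h2 : σ bF = bF
        · -- fixed right endpoint
          have hinner : ∀ i : Fin n, a ≤ i.val → i.val ≤ b - 1 →
              a ≤ (σ i).val ∧ (σ i).val ≤ b - 1 := by
            intro i hi1 hi2
            have hb := hinvr i hi1 (by omega)
            have hne : (σ i).val ≠ b := by
              intro hval
              have h' : σ i = bF := Fin.ext (by omega)
              have h'' : σ (σ i) = σ bF := congrArg σ h'
              rw [hinv, h2] at h''
              have := congrArg Fin.val h''
              omega
            exact ⟨hb.1, by omega⟩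
          obtain ⟨S, T, hSb, hTb, hSi, hTd, hcard⟩ :=
            IH (k - 1) (by omega) a (b - 1) (by omega) (by omega) (by omega) hinner
          have hbS : bF ∉ S := by
            intro h
            have := (hSb bF h).2
            omega
          refine ⟨insert bF S, T, ?_, fun i hi => by have := hTb i hi; omega, ?_, hTd, ?_⟩
          · intro i hi
            rcases Finset.mem_insert.mp hi with h | h
            · subst h; omega
            · have := hSb i h; omega
          · intro i hi j hj hij
            rcases Finset.mem_insert.mp hi with h | h <;>
              rcases Finset.mem_insert.mp hj with h' | h'
            · subst h; subst h'; exact absurd hij (lt_irrefl _)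
            · subst h
              have hjb := hSb j h'
              exact absurd (Fin.lt_def.mp hij) (by omega)
            · subst h'
              have hib := hSb i h
              have := hinner i hib.1 hib.2
              rw [h2]
              exact Fin.lt_def.mpr (by omega)
            · exact hSi i h j h' hij
          · rw [Finset.card_insert_of_notMem hbS]; omega
        · by_cases h3 : σ aF = bF
          · -- swapped endpoints
            have hba : σ bF = aF := by
              have := hinv aF; rw [h3] at this; exact this
            rcases eq_or_lt_of_le (show a + 1 ≤ b by omega) with hone | htwo
            · -- b = a + 1
              have hne : aF ≠ bF := by
                intro h; have := congrArg Fin.val h; omega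
              refine ⟨{aF}, {aF, bF}, ?_, ?_, ?_, ?_, ?_⟩
              · intro i hi; rw [Finset.mem_singleton] at hi; subst hi; omega
              · intro i hi
                rcases Finset.mem_insert.mp hi with h | h
                · subst h; omega
                · rw [Finset.mem_singleton] at h; subst h; omega
              · intro i hi j hj hij
                rw [Finset.mem_singleton] at hi hj; subst hi; subst hj
                exact absurd hij (lt_irrefl _)
              · intro i hi j hj hij
                simp only [Finset.mem_insert, Finset.mem_singleton] at hi hj
                rcases hi with h | h <;> rcases hj with h' | h' <;> subst h <;> subst h'
                · exact absurd hij (lt_irrefl _)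
                · rw [h3, hba]; exact Fin.lt_def.mpr (by omega)
                · exact absurd (Fin.lt_def.mp hij) (by omega)
                · exact absurd hij (lt_irrefl _)
              · rw [Finset.card_insert_of_notMem (by simpa using hne)]
                simp; omega
            · -- a + 1 ≤ b - 1
              have hinner : ∀ i : Fin n, a + 1 ≤ i.val → i.val ≤ b - 1 →
                  a + 1 ≤ (σ i).val ∧ (σ i).val ≤ b - 1 := by
                intro i hi1 hi2
                have hb := hinvr i (by omega) (by omega)
                have hnea : (σ i).val ≠ a := by
                  intro hval
                  have h' : σ i = aF := Fin.ext (by omega)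
                  have h'' : σ (σ i) = σ aF := congrArg σ h'
                  rw [hinv, h3] at h''
                  have := congrArg Fin.val h''
                  omega
                have hneb : (σ i).val ≠ b := by
                  intro hval
                  have h' : σ i = bF := Fin.ext (by omega)
                  have h'' : σ (σ i) = σ bF := congrArg σ h'
                  rw [hinv, hba] at h''
                  have := congrArg Fin.val h''
                  omega
                exact ⟨by omega, by omega⟩
              obtain ⟨S, T, hSb, hTb, hSi, hTd, hcard⟩ :=
                IH (k - 2) (by omega) (a + 1) (b - 1) (by omega) (by omega) (by omega) hinner
              have hbT : bF ∉ T := by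
                intro h; have := (hTb bF h).2; omega
              have haT : aF ∉ insert bF T := by
                intro h
                rcases Finset.mem_insert.mp h with h | h
                · have := congrArg Fin.val h; omega
                · have := (hTb aF h).1; omega
              refine ⟨S, insert aF (insert bF T), fun i hi => by have := hSb i hi; omega,
                ?_, hSi, ?_, ?_⟩
              · intro i hi
                rcases Finset.mem_insert.mp hi with h | h
                · subst h; omega
                rcases Finset.mem_insert.mp h with h | h
                · subst h; omega
                · have := hTb i h; omega
              · intro i hi j hj hij
                simp only [Finset.mem_insert] at hi hj
                rcases hi with h | h | h <;> rcases hj with h' | h' | h'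
                · subst h; subst h'; exact absurd hij (lt_irrefl _)
                · subst h; subst h'; rw [h3, hba]; exact Fin.lt_def.mpr (by omega)
                · subst h
                  have hjb := hTb j h'
                  have := hinner j hjb.1 hjb.2
                  rw [h3]
                  exact Fin.lt_def.mpr (by omega)
                · subst h; subst h'; exact absurd (Fin.lt_def.mp hij) (by omega)
                · subst h; subst h'; exact absurd hij (lt_irrefl _)
                · subst h
                  have hjb := hTb j h'
                  exact absurd (Fin.lt_def.mp hij) (by omega)
                · subst h'
                  have hib := hTb i h
                  exact absurd (Fin.lt_def.mp hij) (by omega)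
                · subst h'
                  have hib := hTb i h
                  have := hinner i hib.1 hib.2
                  rw [hba]
                  exact Fin.lt_def.mpr (by omega)
                · exact hTd i h j h' hij
              · rw [Finset.card_insert_of_notMem haT, Finset.card_insert_of_notMem hbT]
                omega
          · -- contradiction: both endpoints map to the interior
            exfalso
            have hca := hinvr aF (by omega) (by omega)
            have hdb := hinvr bF (by omega) (by omega)
            have hσc : σ (σ aF) = aF := hinv aF
            have hσd : σ (σ bF) = bF := hinv bF
            have hcne_a : (σ aF).val ≠ a := by
              intro h; exact h1 (by rw [show σ aF = aF from Fin.ext (by omega)])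
            have hcne_b : (σ aF).val ≠ b := by
              intro h; exact h3 (by rw [show σ aF = bF from Fin.ext (by omega)])
            have hdne_b : (σ bF).val ≠ b := by
              intro h; exact h2 (by rw [show σ bF = bF from Fin.ext (by omega)])
            have hdne_a : (σ bF).val ≠ a := by
              intro h
              apply h3
              have h' : σ bF = aF := Fin.ext (by omega)
              have h'' : σ (σ bF) = σ aF := congrArg σ h'
              rw [hσd] at h''
              exact h''.symm
            have hcd : (σ aF).val ≠ (σ bF).val := by
              intro h
              have h' : σ aF = σ bF := Fin.ext (by omega)
              have := σ.injective h'
              have := congrArg Fin.val this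
              omega
            rcases lt_or_gt_of_ne hcd with hlt' | hgt'
            · -- σ aF < σ bF : pattern 2143 at (aF, σ aF, σ bF, bF)
              apply h2143
              refine ⟨aF, σ aF, σ bF, bF, Fin.lt_def.mpr (by omega), Fin.lt_def.mpr (by omega),
                Fin.lt_def.mpr (by omega), ?_, ?_, ?_⟩
              · rw [hσc]; exact Fin.lt_def.mpr (by omega)
              · exact Fin.lt_def.mpr (by omega)
              · rw [hσd]
                exact Fin.lt_def.mpr (by omega)
            · -- σ bF < σ aF : pattern 3412 at (aF, σ bF, σ aF, bF)
              apply h3412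
              refine ⟨aF, σ bF, σ aF, bF, Fin.lt_def.mpr (by omega), Fin.lt_def.mpr (by omega),
                Fin.lt_def.mpr (by omega), ?_, ?_, ?_⟩
              · rw [hσc]; exact Fin.lt_def.mpr (by omega)
              · exact Fin.lt_def.mpr (by omega)
              · rw [hσd]; exact Fin.lt_def.mpr (by omega)

theorem skewMerged_involution_hook (n : ℕ) (hn : 1 ≤ n) (σ : Equiv.Perm (Fin n))
    (hsm : SkewMerged σ) (hinv : σ⁻¹ = σ) :
    lisLen σ + ldsLen σ = n + 1 := by
  have hinv' : ∀ i, σ (σ i) = i := by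
    intro i
    have h : σ⁻¹ (σ i) = i := σ.symm_apply_apply i
    rw [hinv] at h
    exact h
  apply le_antisymm
  · -- upper bound: a longest increasing and a longest decreasing set meet in ≤ 1 point
    have hne1 : (Finset.univ.filter (fun s : Finset (Fin n) =>
        ∀ i ∈ s, ∀ j ∈ s, i < j → σ i < σ j)).Nonempty :=
      ⟨∅, Finset.mem_filter.mpr ⟨Finset.mem_univ _, by simp⟩⟩
    have hne2 : (Finset.univ.filter (fun s : Finset (Fin n) =>
        ∀ i ∈ s, ∀ j ∈ s, i < j → σ j < σ i)).Nonempty :=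
      ⟨∅, Finset.mem_filter.mpr ⟨Finset.mem_univ _, by simp⟩⟩
    obtain ⟨S, hS, hSc⟩ := Finset.exists_mem_eq_sup _ hne1 (Finset.card (α := Fin n))
    obtain ⟨T, hT, hTc⟩ := Finset.exists_mem_eq_sup _ hne2 (Finset.card (α := Fin n))
    have hSi := (Finset.mem_filter.mp hS).2
    have hTd := (Finset.mem_filter.mp hT).2
    have hint : (S ∩ T).card ≤ 1 := by
      apply Finset.card_le_one.mpr
      intro x hx y hy
      rw [Finset.mem_inter] at hx hy
      by_contra hne
      rcases lt_or_gt_of_ne hne with h | h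
      · exact absurd (hSi x hx.1 y hy.1 h) (not_lt.mpr (hTd x hx.2 y hy.2 h).le)
      · exact absurd (hSi y hy.1 x hx.1 h) (not_lt.mpr (hTd y hy.2 x hx.2 h).le)
    have hun : (S ∪ T).card ≤ n := by
      calc (S ∪ T).card ≤ Finset.univ.card := Finset.card_le_univ _
        _ = n := by simp
    calc lisLen σ + ldsLen σ = S.card + T.card := by rw [lisLen, ldsLen, hSc, hTc]
      _ = (S ∪ T).card + (S ∩ T).card := (Finset.card_union_add_card_inter S T).symm
      _ ≤ n + 1 := add_le_add hun hint
  · -- lower bound from the key lemma applied to the full interval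
    obtain ⟨S, T, hSb, hTb, hSi, hTd, hcard⟩ :=
      key_lemma σ hsm.1 hsm.2 hinv' (n - 1) 0 (n - 1) (by omega) (by omega) rfl
        (fun i _ _ => ⟨Nat.zero_le _, by omega⟩)
    have hS : S ∈ Finset.univ.filter (fun s : Finset (Fin n) =>
        ∀ i ∈ s, ∀ j ∈ s, i < j → σ i < σ j) :=
      Finset.mem_filter.mpr ⟨Finset.mem_univ _, hSi⟩
    have hT : T ∈ Finset.univ.filter (fun s : Finset (Fin n) =>
        ∀ i ∈ s, ∀ j ∈ s, i < j → σ j < σ i) :=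
      Finset.mem_filter.mpr ⟨Finset.mem_univ _, hTd⟩
    have h1 : S.card ≤ lisLen σ := Finset.le_sup hS
    have h2 : T.card ≤ ldsLen σ := Finset.le_sup hT
    omega
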